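/- arXiv:1601.05638 — 2 statements merged into one kernel-verified Lean document; each statement's English description precedes it below -/
import Mathlib

section
/- Let s : ℕ → ℕ be a sequence of positive integers with s_L → ∞ and s_L/L → 0 as L → ∞. Then there exist a constant A > 0 and an integer L₀ such that for all integers L ≥ L₀, all integers N with Δ = L/N ∈ (0, 1/2], and all Ω, Ω' ∈ 𝒟_L = [−(1−s_L/L), 1−s_L/L], the quantity I₂(Ω,Ω') = ∑_{k=L+1}^{N−L−1} f_{L,Δ}(k/L − Ω) · conj(f_{L,Δ}(k/L − Ω')) satisfies s_L · |I₂(Ω,Ω')| < A (the sum is empty, hence I₂ = 0, when N = 2L). -/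
open Complex Finset Filter

/-- `f_{L,Δ}(Ω) = (Δ/L) ∑_{n=0}^{N-1} exp(-2π i n Δ Ω)` with `Δ = L/N`. -/
noncomputable def fLD (L N : ℕ) (Ω : ℝ) : ℂ :=
  (((((L : ℝ) / N) / L) : ℝ) : ℂ) *
    ∑ n ∈ Finset.range N,
      Complex.exp ((-2 : ℂ) * (Real.pi : ℂ) * Complex.I * (n : ℂ) *
        (((L : ℝ) / N : ℝ) : ℂ) * (Ω : ℂ))

lemma abs_exp_mul_I_sub_one (θ : ℝ) :
    ‖Complex.exp ((θ:ℂ) * I) - 1‖ = 2 * |Real.sin (θ/2)| := by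
  have h3 : Real.cos θ = 1 - 2 * Real.sin (θ/2)^2 := by
    have h1 := Real.cos_two_mul (θ/2)
    have h2 := Real.sin_sq_add_cos_sq (θ/2)
    have : 2 * (θ/2) = θ := by ring
    rw [this] at h1; linarith
  have key : (Real.cos θ - 1)^2 + (Real.sin θ)^2 = (2 * |Real.sin (θ/2)|)^2 := by
    have h2 := Real.sin_sq_add_cos_sq θ
    have h4 : |Real.sin (θ/2)|^2 = Real.sin (θ/2)^2 := sq_abs _
    nlinarith
  rw [Complex.exp_mul_I, ← Complex.ofReal_cos, ← Complex.ofReal_sin]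
  have : (↑(Real.cos θ) + ↑(Real.sin θ) * I - 1 : ℂ) = ↑(Real.cos θ - 1) + ↑(Real.sin θ) * I := by
    push_cast; ring
  rw [this, Complex.norm_add_mul_I, key, Real.sqrt_sq (by positivity)]

lemma geom_abs_le (θ : ℝ) (N : ℕ) (h : Real.sin (θ/2) ≠ 0) :
    ‖∑ n ∈ range N, Complex.exp ((θ:ℂ) * n * I)‖ ≤ 1 / |Real.sin (θ/2)| := by
  have hz : ∀ n : ℕ, Complex.exp ((θ:ℂ) * n * I) = Complex.exp ((θ:ℂ) * I) ^ n := by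
    intro n; rw [← Complex.exp_nat_mul]; ring_nf
  set z := Complex.exp ((θ:ℂ) * I) with hzdef
  have hz1 : z ≠ 1 := by
    intro hc
    have := abs_exp_mul_I_sub_one θ
    rw [← hzdef, hc] at this
    simp at this
    exact h this
  have habs : ‖z‖ = 1 := Complex.norm_exp_ofReal_mul_I θ
  have hsum : ∑ n ∈ range N, Complex.exp ((θ:ℂ) * n * I) = (z ^ N - 1) / (z - 1) := by
    rw [Finset.sum_congr rfl (fun n _ => hz n)]
    exact geom_sum_eq hz1 N
  rw [hsum, norm_div]
  have h1 : ‖z ^ N - 1‖ ≤ 2 := by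
    calc ‖z ^ N - 1‖ ≤ ‖z ^ N‖ + 1 := by
          simpa using norm_sub_le (z ^ N) 1
      _ ≤ 2 := by rw [norm_pow, habs, one_pow]; norm_num
  have h2 : ‖z - 1‖ = 2 * |Real.sin (θ/2)| := abs_exp_mul_I_sub_one θ
  rw [h2]
  have hpos : 0 < |Real.sin (θ/2)| := abs_pos.mpr h
  rw [div_le_div_iff₀ (by positivity) hpos]
  nlinarith

lemma fLD_abs_le (L N : ℕ) (hL : 0 < L) (hN : 0 < N) (x : ℝ)
    (ht0 : 0 < (L:ℝ)/N * x) (ht1 : (L:ℝ)/N * x < 1) :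
    ‖fLD L N x‖ ≤
      (1/N) * (1 / (2 * min ((L:ℝ)/N*x) (1 - (L:ℝ)/N*x))) := by
  set t : ℝ := (L:ℝ)/N * x with htdef
  set θ : ℝ := -2 * Real.pi * t with hθdef
  have hterm : ∀ n : ℕ, Complex.exp ((-2 : ℂ) * (Real.pi : ℂ) * Complex.I * (n : ℂ) *
        (((L : ℝ) / N : ℝ) : ℂ) * (x : ℝ)) = Complex.exp ((θ:ℂ) * n * I) := by
    intro n; congr 1; push_cast [hθdef, htdef]; ring
  have hsin : Real.sin (θ/2) = - Real.sin (Real.pi * t) := by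
    rw [hθdef]
    have : -2 * Real.pi * t / 2 = -(Real.pi * t) := by ring
    rw [this, Real.sin_neg]
  have hsinpos : 0 < Real.sin (Real.pi * t) := by
    apply Real.sin_pos_of_pos_of_lt_pi
    · positivity
    · nlinarith [Real.pi_pos]
  have hm : 2 * min t (1 - t) ≤ Real.sin (Real.pi * t) := by
    rcases le_or_gt t (1/2) with h | h
    · have hmin : min t (1 - t) = t := min_eq_left (by linarith)
      rw [hmin]
      have := Real.mul_le_sin (x := Real.pi * t) (by positivity)
        (by nlinarith [Real.pi_pos])
      calc 2 * t = 2 / Real.pi * (Real.pi * t) := by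
            field_simp
        _ ≤ Real.sin (Real.pi * t) := this
    · have hmin : min t (1 - t) = 1 - t := min_eq_right (by linarith)
      rw [hmin, ← Real.sin_pi_sub]
      have h1 : Real.pi - Real.pi * t = Real.pi * (1 - t) := by ring
      rw [h1]
      have := Real.mul_le_sin (x := Real.pi * (1 - t)) (by nlinarith [Real.pi_pos])
        (by nlinarith [Real.pi_pos])
      calc 2 * (1 - t) = 2 / Real.pi * (Real.pi * (1 - t)) := by field_simp
        _ ≤ Real.sin (Real.pi * (1 - t)) := this
  have hmpos : 0 < min t (1 - t) := lt_min ht0 (by linarith)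
  have hsne : Real.sin (θ/2) ≠ 0 := by rw [hsin]; exact neg_ne_zero.mpr (ne_of_gt hsinpos)
  have hgeom := geom_abs_le θ N hsne
  rw [hsin, abs_neg, abs_of_pos hsinpos] at hgeom
  have hcoef : ‖(((((L : ℝ) / N) / L) : ℝ) : ℂ)‖ = 1 / N := by
    rw [Complex.norm_real, Real.norm_eq_abs]
    have hLne : (L:ℝ) ≠ 0 := Nat.cast_ne_zero.mpr hL.ne'
    have : ((L : ℝ) / N) / L = 1 / N := by field_simp
    rw [this]
    exact abs_of_nonneg (by positivity)
  rw [fLD, norm_mul, hcoef, Finset.sum_congr rfl (fun n _ => hterm n)]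
  have h2 : ‖∑ n ∈ range N, Complex.exp ((θ:ℂ) * n * I)‖
      ≤ 1 / (2 * min t (1 - t)) := by
    refine hgeom.trans ?_
    apply one_div_le_one_div_of_le (by positivity) hm
  calc (1/(N:ℝ)) * ‖∑ n ∈ range N, Complex.exp ((θ:ℂ) * n * I)‖
      ≤ (1/(N:ℝ)) * (1 / (2 * min t (1 - t))) := by
        apply mul_le_mul_of_nonneg_left h2 (by positivity)
    _ = _ := rfl

lemma sum_inv_sq_map_le (S : Finset ℕ) (e : ℕ → ℕ) (s m : ℕ)
    (hinj : Set.InjOn e S) (hmem : ∀ k ∈ S, e k ∈ Finset.Ioo s m) :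
    ∑ k ∈ S, (((e k : ℕ):ℝ)^2)⁻¹ ≤ 2/(s+1) := by
  have him : ∑ j ∈ S.image e, ((j:ℝ)^2)⁻¹ = ∑ k ∈ S, (((e k:ℕ):ℝ)^2)⁻¹ :=
    Finset.sum_image (fun x hx y hy h => hinj hx hy h)
  rw [← him]
  calc ∑ j ∈ S.image e, ((j:ℝ)^2)⁻¹ ≤ ∑ j ∈ Finset.Ioo s m, ((j:ℝ)^2)⁻¹ := by
        apply Finset.sum_le_sum_of_subset_of_nonneg
        · intro j hj
          obtain ⟨k, hk, rfl⟩ := Finset.mem_image.mp hj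
          exact hmem k hk
        · intro j _ _; positivity
    _ ≤ 2/(s+1) := by
        have := sum_Ioo_inv_sq_le (α := ℝ) s m
        push_cast at this ⊢
        convert this using 2

lemma min_inv_sq_le {t a b : ℝ} (ha : 0 < a) (hb : 0 < b) (hta : a ≤ t) (htb : b ≤ 1 - t) :
    (1/(min t (1-t)))^2 ≤ 1/a^2 + 1/b^2 := by
  have ht : 0 < t := lt_of_lt_of_le ha hta
  have h1t : 0 < 1 - t := lt_of_lt_of_le hb htb
  rcases min_cases t (1-t) with ⟨h1, _⟩ | ⟨h1, _⟩ <;> rw [h1]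
  · have : (1/t)^2 ≤ 1/a^2 := by
      rw [div_pow, one_pow]
      exact one_div_le_one_div_of_le (by positivity) (by nlinarith)
    have h0 : 0 ≤ 1/b^2 := by positivity
    linarith
  · have : (1/(1-t))^2 ≤ 1/b^2 := by
      rw [div_pow, one_pow]
      exact one_div_le_one_div_of_le (by positivity) (by nlinarith)
    have h0 : 0 ≤ 1/a^2 := by positivity
    linarith

set_option maxHeartbeats 1000000 in
/-- If `s : ℕ → ℕ` is a sequence of positive integers with
`s L → ∞` and `s L / L → 0`, then there exist `A > 0` and `L₀` such that for all
`L ≥ L₀`, all `N` with `Δ = L/N ∈ (0, 1/2]`, and all `Ω, Ω'` in the restricted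
interval `𝒟_L = [-(1 - s L / L), 1 - s L / L]`, the quantity
`I₂(Ω,Ω') = ∑_{k=L+1}^{N-L-1} f_{L,Δ}(k/L - Ω) conj(f_{L,Δ}(k/L - Ω'))`
satisfies `s L * |I₂(Ω,Ω')| < A`. -/
theorem I2_bound (s : ℕ → ℕ) (hpos : ∀ L, 0 < s L)
    (hs1 : Tendsto (fun L => (s L : ℝ)) atTop atTop)
    (hs2 : Tendsto (fun L => (s L : ℝ) / L) atTop (nhds 0)) :
    ∃ A > (0 : ℝ), ∃ L₀ : ℕ, ∀ L : ℕ, L₀ ≤ L → ∀ N : ℕ,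
      0 < (L : ℝ) / N → (L : ℝ) / N ≤ 1 / 2 →
      ∀ Ω ∈ Set.Icc (-(1 - (s L : ℝ) / L)) (1 - (s L : ℝ) / L),
      ∀ Ω' ∈ Set.Icc (-(1 - (s L : ℝ) / L)) (1 - (s L : ℝ) / L),
      (s L : ℝ) * ‖∑ k ∈ Finset.Ioo L (N - L),
          fLD L N ((k : ℝ) / L - Ω) * (starRingEnd ℂ) (fLD L N ((k : ℝ) / L - Ω'))‖ < A := by
  refine ⟨2, by norm_num, 0, ?_⟩
  intro L _ N hΔpos hΔle Ω hΩ Ω' hΩ'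
  have hN : 0 < N := by
    rcases Nat.eq_zero_or_pos N with h | h
    · exfalso; rw [h] at hΔpos; simp at hΔpos
    · exact h
  have hL : 0 < L := by
    rcases Nat.eq_zero_or_pos L with h | h
    · exfalso; rw [h] at hΔpos; simp at hΔpos
    · exact h
  have hNR : (0:ℝ) < N := by exact_mod_cast hN
  have hLR : (0:ℝ) < L := by exact_mod_cast hL
  set S : ℕ := s L with hSdef
  have hS1 : 1 ≤ S := hpos L
  have hSR : (1:ℝ) ≤ S := by exact_mod_cast hS1
  obtain ⟨hΩ1, hΩ2⟩ := hΩ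
  obtain ⟨hΩ'1, hΩ'2⟩ := hΩ'
  have hSL : (S:ℝ)/L ≤ 1 := by linarith
  have hN2L : 2*L ≤ N := by
    have h2 : (L:ℝ) * 2 ≤ 1 * N := by
      rw [← div_le_div_iff₀ hNR (by norm_num : (0:ℝ) < 2)]
      exact hΔle
    have : (2*L : ℝ) ≤ (N:ℝ) := by push_cast; linarith
    exact_mod_cast this
  have hLne : (L:ℝ) ≠ 0 := hLR.ne'
  have hNne : (N:ℝ) ≠ 0 := hNR.ne'
  -- per-k data
  have u_def : True := trivial
  let u : ℕ → ℝ := fun k => (((k - L + S : ℕ):ℝ)^2)⁻¹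
  let v : ℕ → ℝ := fun k => (((N - L - k + S : ℕ):ℝ)^2)⁻¹
  have key : ∀ k ∈ Finset.Ioo L (N - L),
      ‖fLD L N ((k : ℝ) / L - Ω) * (starRingEnd ℂ) (fLD L N ((k : ℝ) / L - Ω'))‖
        ≤ (1/4) * (u k + v k) := by
    intro k hk
    rw [Finset.mem_Ioo] at hk
    obtain ⟨hkL, hkN⟩ := hk
    have hkLN : k + L < N := by omega
    have hkLR : (L:ℝ) + 1 ≤ k := by exact_mod_cast hkL
    have hkNR : (k:ℝ) + L + 1 ≤ N := by exact_mod_cast hkLN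
    -- cast identities
    have hc1 : (((k - L + S : ℕ)):ℝ) = (k:ℝ) - L + S := by
      push_cast [Nat.cast_sub hkL.le]; ring
    have hc2 : (((N - L - k + S : ℕ)):ℝ) = (N:ℝ) - L - k + S := by
      have : N - L - k = N - (L + k) := by omega
      rw [this]
      push_cast [Nat.cast_sub (by omega : L + k ≤ N)]; ring
    -- bounds on t for a generic ω in the interval
    have tb : ∀ ω : ℝ, -(1 - (S:ℝ)/L) ≤ ω → ω ≤ 1 - (S:ℝ)/L →
        ((k:ℝ) - L + S)/N ≤ (L:ℝ)/N * ((k:ℝ)/L - ω) ∧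
        (L:ℝ)/N * ((k:ℝ)/L - ω) ≤ ((k:ℝ) + L - S)/N := by
      intro ω h1 h2
      have hrw : (L:ℝ)/N * ((k:ℝ)/L - ω) = (k:ℝ)/N - (L:ℝ)/N * ω := by
        field_simp
      have hΔnn : (0:ℝ) ≤ (L:ℝ)/N := le_of_lt hΔpos
      have e1 : (L:ℝ)/N * (1 - (S:ℝ)/L) = (L:ℝ)/N - (S:ℝ)/N := by
        field_simp
      constructor
      · have := mul_le_mul_of_nonneg_left h2 hΔnn
        rw [e1] at this
        rw [hrw]
        have hsplit : ((k:ℝ) - L + S)/N = (k:ℝ)/N - (L:ℝ)/N + (S:ℝ)/N := by ring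
        linarith [hsplit.le]
      · have := mul_le_mul_of_nonneg_left h1 hΔnn
        rw [mul_neg, e1] at this
        rw [hrw]
        have hsplit : ((k:ℝ) + L - S)/N = (k:ℝ)/N + (L:ℝ)/N - (S:ℝ)/N := by ring
        linarith [hsplit.le]
    have hlowpos : 0 < ((k:ℝ) - L + S)/N := by
      apply div_pos _ hNR; linarith
    have hhighpos : 0 < ((N:ℝ) - k - L + S)/N := by
      apply div_pos _ hNR; linarith
    -- generic per-point estimate
    have fb : ∀ ω : ℝ, -(1 - (S:ℝ)/L) ≤ ω → ω ≤ 1 - (S:ℝ)/L →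
        ‖fLD L N ((k:ℝ)/L - ω)‖ ≤
          (1/N) * (1 / (2 * min ((L:ℝ)/N * ((k:ℝ)/L - ω)) (1 - (L:ℝ)/N * ((k:ℝ)/L - ω)))) ∧
        (1 / min ((L:ℝ)/N * ((k:ℝ)/L - ω)) (1 - (L:ℝ)/N * ((k:ℝ)/L - ω)))^2
          ≤ (N:ℝ)^2 * (u k + v k) ∧
        0 < min ((L:ℝ)/N * ((k:ℝ)/L - ω)) (1 - (L:ℝ)/N * ((k:ℝ)/L - ω)) := by
      intro ω h1 h2
      obtain ⟨tl, th⟩ := tb ω h1 h2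
      set t : ℝ := (L:ℝ)/N * ((k:ℝ)/L - ω) with htdef
      have ht0 : 0 < t := lt_of_lt_of_le hlowpos tl
      have h1t : ((N:ℝ) - k - L + S)/N ≤ 1 - t := by
        have : 1 - ((k:ℝ) + L - S)/N = ((N:ℝ) - k - L + S)/N := by field_simp; ring
        linarith [this.ge]
      have ht1 : t < 1 := by
        have h1tpos : 0 < 1 - t := lt_of_lt_of_le hhighpos h1t
        linarith
      have hmin := min_inv_sq_le hlowpos hhighpos tl h1t
      refine ⟨fLD_abs_le L N hL hN _ ht0 ht1, ?_, lt_min ht0 (by linarith)⟩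
      refine hmin.trans ?_
      have hX1 : (0:ℝ) < (k:ℝ) - L + S := by linarith
      have hX2 : (0:ℝ) < (N:ℝ) - k - L + S := by linarith
      have e1 : 1/(((k:ℝ) - L + S)/N)^2 = (N:ℝ)^2 * u k := by
        show _ = (N:ℝ)^2 * ((((k - L + S : ℕ):ℝ))^2)⁻¹
        rw [hc1]
        field_simp
      have e2 : 1/(((N:ℝ) - k - L + S)/N)^2 = (N:ℝ)^2 * v k := by
        show _ = (N:ℝ)^2 * ((((N - L - k + S : ℕ):ℝ))^2)⁻¹
        rw [hc2]
        have h9 : (N:ℝ) - L - k + S = (N:ℝ) - k - L + S := by ring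
        rw [h9]
        field_simp
      rw [e1, e2]; ring_nf; rfl
    obtain ⟨f1, g1, m1pos⟩ := fb Ω hΩ1 hΩ2
    obtain ⟨f2, g2, m2pos⟩ := fb Ω' hΩ'1 hΩ'2
    set m₁ : ℝ := min ((L:ℝ)/N * ((k:ℝ)/L - Ω)) (1 - (L:ℝ)/N * ((k:ℝ)/L - Ω))
    set m₂ : ℝ := min ((L:ℝ)/N * ((k:ℝ)/L - Ω')) (1 - (L:ℝ)/N * ((k:ℝ)/L - Ω'))
    have habs : ‖fLD L N ((k : ℝ) / L - Ω) * (starRingEnd ℂ) (fLD L N ((k : ℝ) / L - Ω'))‖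
        = ‖fLD L N ((k : ℝ) / L - Ω)‖ * ‖fLD L N ((k : ℝ) / L - Ω')‖ := by
      rw [norm_mul, Complex.norm_conj]
    rw [habs]
    have step1 : ‖fLD L N ((k : ℝ) / L - Ω)‖ * ‖fLD L N ((k : ℝ) / L - Ω')‖
        ≤ ((1/N) * (1/(2*m₁))) * ((1/N) * (1/(2*m₂))) := by
      apply mul_le_mul f1 f2 (norm_nonneg _) (by positivity)
    refine step1.trans ?_
    have amgm : (1/m₁) * (1/m₂) ≤ ((1/m₁)^2 + (1/m₂)^2)/2 := by
      nlinarith [sq_nonneg (1/m₁ - 1/m₂)]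
    have hsum : (1/m₁)^2 + (1/m₂)^2 ≤ 2 * ((N:ℝ)^2 * (u k + v k)) := by linarith
    have expand : ((1/(N:ℝ)) * (1/(2*m₁))) * ((1/(N:ℝ)) * (1/(2*m₂)))
        = (1/(4*(N:ℝ)^2)) * ((1/m₁) * (1/m₂)) := by
      field_simp; ring
    rw [expand]
    have : (1/(4*(N:ℝ)^2)) * ((1/m₁) * (1/m₂)) ≤ (1/(4*(N:ℝ)^2)) * (((N:ℝ)^2 * (u k + v k))) := by
      apply mul_le_mul_of_nonneg_left _ (by positivity)
      calc (1/m₁) * (1/m₂) ≤ ((1/m₁)^2 + (1/m₂)^2)/2 := amgm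
        _ ≤ (N:ℝ)^2 * (u k + v k) := by linarith
    refine this.trans ?_
    have : (1/(4*(N:ℝ)^2)) * ((N:ℝ)^2 * (u k + v k)) = (1/4) * (u k + v k) := by
      field_simp
    rw [this]
  -- sum the bounds
  have habs_sum : ‖∑ k ∈ Finset.Ioo L (N - L),
      fLD L N ((k : ℝ) / L - Ω) * (starRingEnd ℂ) (fLD L N ((k : ℝ) / L - Ω'))‖
      ≤ ∑ k ∈ Finset.Ioo L (N - L), (1/4) * (u k + v k) :=
    (norm_sum_le _ _).trans (Finset.sum_le_sum key)
  have hsumu : ∑ k ∈ Finset.Ioo L (N - L), u k ≤ 2/((S:ℝ)+1) := by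
    have := sum_inv_sq_map_le (Finset.Ioo L (N - L)) (fun k => k - L + S) S (N + S)
      (fun x hx y hy h => by
        simp only [Finset.coe_Ioo, Set.mem_Ioo] at hx hy
        simp only at h; omega)
      (fun k hk => by
        simp only [Finset.mem_Ioo] at hk ⊢; omega)
    exact this
  have hsumv : ∑ k ∈ Finset.Ioo L (N - L), v k ≤ 2/((S:ℝ)+1) := by
    have := sum_inv_sq_map_le (Finset.Ioo L (N - L)) (fun k => N - L - k + S) S (N + S)
      (fun x hx y hy h => by
        simp only [Finset.coe_Ioo, Set.mem_Ioo] at hx hy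
        simp only at h; omega)
      (fun k hk => by
        simp only [Finset.mem_Ioo] at hk ⊢; omega)
    exact this
  have htotal : ‖∑ k ∈ Finset.Ioo L (N - L),
      fLD L N ((k : ℝ) / L - Ω) * (starRingEnd ℂ) (fLD L N ((k : ℝ) / L - Ω'))‖
      ≤ 1/((S:ℝ)+1) := by
    refine habs_sum.trans ?_
    rw [← Finset.mul_sum, Finset.sum_add_distrib]
    calc (1/4) * (∑ k ∈ Finset.Ioo L (N-L), u k + ∑ k ∈ Finset.Ioo L (N-L), v k)
        ≤ (1/4) * (2/((S:ℝ)+1) + 2/((S:ℝ)+1)) := by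
          apply mul_le_mul_of_nonneg_left (by linarith) (by norm_num)
      _ = 1/((S:ℝ)+1) := by ring
  calc (S:ℝ) * ‖∑ k ∈ Finset.Ioo L (N - L),
        fLD L N ((k : ℝ) / L - Ω) * (starRingEnd ℂ) (fLD L N ((k : ℝ) / L - Ω'))‖
      ≤ (S:ℝ) * (1/((S:ℝ)+1)) := by
        apply mul_le_mul_of_nonneg_left htotal (by positivity)
    _ < 2 := by
        rw [mul_one_div, div_lt_iff₀ (by linarith)]
        linarith
end

section
/- There exists a constant A > 0 such that for all positive integers L and N with Δ = L/N ∈ (0, 1/2], every integer k with 0 ≤ k ≤ L, and every Ω ∈ [−1, 1] with |k − LΩ| < 2L: |f_{L,1/2}(k/L − Ω) − f_{L,Δ}(k/L − Ω)|² < 1/(4L²) + A/(2L − |k − LΩ|)². -/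
set_option maxHeartbeats 1000000

section Helpers
open Complex Real

lemma sin_sub_self_bound (θ : ℝ) : |Real.sin θ - θ| ≤ 2 * θ ^ 2 := by
  have key : ∀ t : ℝ, 0 ≤ t → |Real.sin t - t| ≤ 2 * t ^ 2 := by
    intro t ht
    rcases eq_or_lt_of_le ht with h | h
    · simp [← h]
    have hs1 : Real.sin t ≤ 1 := Real.sin_le_one t
    have hs2 : -1 ≤ Real.sin t := Real.neg_one_le_sin t
    rcases le_or_gt t 1 with h1 | h1
    · have h2 := Real.sin_gt_sub_cube h
      have h3 : Real.sin t < t := Real.sin_lt h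
      rw [abs_le]; constructor <;> nlinarith
    · rw [abs_le]; constructor <;> nlinarith
  rcases le_or_gt 0 θ with h | h
  · exact key θ h
  · have h2 := key (-θ) (by linarith)
    rw [Real.sin_neg] at h2
    calc |Real.sin θ - θ| = |(-(Real.sin θ)) - (-θ)| := by rw [← abs_neg]; ring_nf
    _ ≤ 2 * (-θ)^2 := h2
    _ = 2 * θ^2 := by ring

lemma one_sub_cos_bound (θ : ℝ) : |Real.cos θ - 1| ≤ θ ^ 2 / 2 := by
  have h : Real.cos θ = 1 - 2 * Real.sin (θ/2) ^ 2 := by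
    have := Real.cos_two_mul' (θ/2)
    have h2 := Real.sin_sq_add_cos_sq (θ/2)
    rw [show 2*(θ/2) = θ by ring] at this
    nlinarith
  have hs := Real.sin_sq_le_sq (x := θ/2)
  have hc : Real.cos θ - 1 ≤ 0 := by nlinarith [Real.cos_le_one θ]
  rw [abs_of_nonpos hc]
  nlinarith

/-- numerator bound: |e^{-iθ} - 1 + iθ| ≤ 3θ² -/
lemma num_bound (θ : ℝ) : ‖Complex.exp (-(θ:ℂ) * Complex.I) - 1 + (θ:ℂ) * Complex.I‖ ≤ 3 * θ ^ 2 := by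
  have he : Complex.exp (-(θ:ℂ) * Complex.I)
      = (Real.cos θ : ℂ) - (Real.sin θ : ℂ) * Complex.I := by
    rw [show -(θ:ℂ) * Complex.I = ((-θ:ℝ):ℂ) * Complex.I by push_cast; ring,
      Complex.exp_mul_I]
    push_cast
    rw [Complex.cos_neg, Complex.sin_neg, ← Complex.ofReal_cos, ← Complex.ofReal_sin]
    ring
  rw [he]
  have : (Real.cos θ : ℂ) - (Real.sin θ : ℂ) * Complex.I - 1 + (θ:ℂ) * Complex.I
      = ((Real.cos θ - 1 : ℝ) : ℂ) + ((θ - Real.sin θ : ℝ):ℂ) * Complex.I := by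
    push_cast; ring
  rw [this]
  calc ‖((Real.cos θ - 1 : ℝ) : ℂ) + ((θ - Real.sin θ : ℝ):ℂ) * Complex.I‖
      ≤ ‖((Real.cos θ - 1 : ℝ) : ℂ)‖ + ‖((θ - Real.sin θ : ℝ):ℂ) * Complex.I‖ := by
        apply norm_add_le
    _ = |Real.cos θ - 1| + |θ - Real.sin θ| := by
        rw [norm_mul, Complex.norm_I, mul_one, Complex.norm_real, Complex.norm_real, Real.norm_eq_abs, Real.norm_eq_abs]
    _ ≤ θ^2/2 + 2*θ^2 := by
        have := one_sub_cos_bound θ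
        have h2 := sin_sub_self_bound θ
        rw [abs_sub_comm] at h2
        linarith
    _ ≤ 3 * θ^2 := by nlinarith

lemma sin_lower {t : ℝ} (h0 : 0 < t) (h1 : t < π) :
    2 / π * min t (π - t) ≤ Real.sin t := by
  rcases le_or_gt t (π/2) with h | h
  · calc 2/π * min t (π - t) ≤ 2/π * t := by
          apply mul_le_mul_of_nonneg_left (min_le_left _ _)
          positivity
    _ ≤ Real.sin t := Real.mul_le_sin h0.le h
  · have := Real.mul_le_sin (x := π - t) (by linarith) (by linarith)
    rw [Real.sin_pi_sub] at this
    calc 2/π * min t (π - t) ≤ 2/π * (π - t) := by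
          apply mul_le_mul_of_nonneg_left (min_le_right _ _)
          positivity
    _ ≤ Real.sin t := this

/-- `|1 - e^{-iθ}| = 2|sin(θ/2)|`. -/
lemma abs_one_sub_exp (θ : ℝ) :
    ‖1 - Complex.exp (-(θ:ℂ) * Complex.I)‖ = 2 * |Real.sin (θ/2)| := by
  have he : Complex.exp (-(θ:ℂ) * Complex.I)
      = (Real.cos θ : ℂ) - (Real.sin θ : ℂ) * Complex.I := by
    rw [show -(θ:ℂ) * Complex.I = ((-θ:ℝ):ℂ) * Complex.I by push_cast; ring,
      Complex.exp_mul_I]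
    push_cast
    rw [Complex.cos_neg, Complex.sin_neg, ← Complex.ofReal_cos, ← Complex.ofReal_sin]
    ring
  rw [he]
  have h1 : (1:ℂ) - ((Real.cos θ : ℂ) - (Real.sin θ : ℂ) * Complex.I)
      = ((1 - Real.cos θ : ℝ):ℂ) + ((Real.sin θ : ℝ):ℂ) * Complex.I := by push_cast; ring
  rw [h1]
  have habs : ‖((1 - Real.cos θ : ℝ):ℂ) + ((Real.sin θ : ℝ):ℂ) * Complex.I‖
      = Real.sqrt ((1 - Real.cos θ)^2 + (Real.sin θ)^2) := by
    rw [Complex.norm_def, Complex.normSq_apply]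
    simp only [Complex.add_re, Complex.add_im, Complex.ofReal_re, Complex.ofReal_im,
      Complex.mul_re, Complex.mul_im, Complex.I_re, Complex.I_im]
    ring_nf
  rw [habs]
  have hc : Real.cos θ = 1 - 2 * Real.sin (θ/2) ^ 2 := by
    have := Real.cos_two_mul' (θ/2)
    have h2 := Real.sin_sq_add_cos_sq (θ/2)
    rw [show 2*(θ/2) = θ by ring] at this
    nlinarith
  have hs : Real.sin θ = 2 * Real.sin (θ/2) * Real.cos (θ/2) := by
    have := Real.sin_two_mul (θ/2)
    rw [show 2*(θ/2) = θ by ring] at this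
    exact this
  have h2 : (1 - Real.cos θ)^2 + (Real.sin θ)^2 = (2 * |Real.sin (θ/2)|)^2 := by
    have h3 : (2 * |Real.sin (θ / 2)|) ^ 2 = 4 * Real.sin (θ/2)^2 := by
      rw [mul_pow, _root_.sq_abs]; ring
    rw [hc, hs, h3]
    have := Real.sin_sq_add_cos_sq (θ/2)
    nlinarith
  rw [h2, Real.sqrt_sq (by positivity)]

lemma one_sub_exp_ne {θ : ℝ} (h0 : θ ≠ 0) (h2 : |θ| < 2*π) :
    (1:ℂ) - Complex.exp (-(θ:ℂ) * Complex.I) ≠ 0 := by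
  intro h
  have he : Complex.exp (-(θ:ℂ) * Complex.I) = 1 := by
    have := sub_eq_zero.mp h
    exact this.symm
  rw [Complex.exp_eq_one_iff] at he
  obtain ⟨n, hn⟩ := he
  have hI' : (-(θ:ℂ)) * Complex.I = ((n:ℂ) * (2*π)) * Complex.I := by rw [hn]; ring
  have hI : (-(θ:ℂ)) = (n:ℂ) * (2*π) := mul_right_cancel₀ Complex.I_ne_zero hI'
  have hr : -θ = n * (2*π) := by
    have : ((-θ : ℝ):ℂ) = ((n * (2*π) : ℝ):ℂ) := by exact_mod_cast hI
    exact_mod_cast this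
  have hn0 : n ≠ 0 := by
    rintro rfl; simp at hr; exact h0 (by linarith)
  have h1 : (1:ℝ) ≤ |(n:ℝ)| := by
    exact_mod_cast Int.one_le_abs (by exact_mod_cast hn0)
  have : |θ| = |(n:ℝ)| * (2*π) := by
    rw [show θ = -(n * (2*π)) by linarith, abs_neg, abs_mul]
    rw [abs_of_pos (by positivity : (0:ℝ) < 2*π)]
  nlinarith [Real.pi_pos]


lemma h_bound {θ : ℝ} (h0 : θ ≠ 0) (h2 : |θ| < 2*π) :
    ‖1/(1 - Complex.exp (-(θ:ℂ)*Complex.I)) - 1/((θ:ℂ)*Complex.I)‖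
      ≤ 3*π/2 + 3*π^2/(2*π - |θ|) := by
  have ha : 0 < |θ| := abs_pos.mpr h0
  set a := |θ| with hadef
  have hd : (1:ℂ) - Complex.exp (-(θ:ℂ)*Complex.I) ≠ 0 := one_sub_exp_ne h0 h2
  have hz : ((θ:ℂ)*Complex.I) ≠ 0 := by
    simp [Complex.ext_iff, h0]
  -- identity
  have hid : 1/(1 - Complex.exp (-(θ:ℂ)*Complex.I)) - 1/((θ:ℂ)*Complex.I)
      = (Complex.exp (-(θ:ℂ)*Complex.I) - 1 + (θ:ℂ)*Complex.I) /
        (((θ:ℂ)*Complex.I) * (1 - Complex.exp (-(θ:ℂ)*Complex.I))) := by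
    rw [div_sub_div _ _ hd hz]
    congr 1
    · ring
    · ring
  rw [hid, norm_div, norm_mul]
  have hzabs : ‖(θ:ℂ)*Complex.I‖ = a := by
    rw [norm_mul, Complex.norm_I, mul_one, Complex.norm_real, Real.norm_eq_abs]
  rw [hzabs, abs_one_sub_exp]
  -- lower bound of |sin(θ/2)|
  set m := min a (2*π - a) with hm
  have hm0 : 0 < m := lt_min ha (by linarith)
  have hsin : (1/π) * m ≤ |Real.sin (θ/2)| := by
    have habs2 : |Real.sin (θ/2)| = Real.sin (a/2) := by
      rcases le_or_gt 0 θ with h | h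
      · rw [hadef, _root_.abs_of_nonneg h, _root_.abs_of_nonneg]
        apply Real.sin_nonneg_of_nonneg_of_le_pi <;> [positivity; skip]
        have h5 : θ ≤ a := hadef ▸ le_abs_self θ
        linarith
      · rw [hadef, abs_of_neg h, show (-θ)/2 = -(θ/2) by ring, Real.sin_neg,
          abs_of_nonpos]
        apply Real.sin_nonpos_of_nonpos_of_neg_pi_le
        · linarith
        · have h5 : -a ≤ θ := hadef ▸ neg_abs_le θ
          linarith
    rw [habs2]
    have := sin_lower (t := a/2) (by positivity) (by linarith)
    have hmin : min (a/2) (π - a/2) = m/2 := by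
      rcases min_cases a (2*π - a) with ⟨h1,_⟩ | ⟨h1,_⟩ <;>
        rw [hm, h1] <;> [rw [min_eq_left (by linarith)]; rw [min_eq_right (by linarith)]] <;> ring
    rw [hmin] at this
    calc (1/π) * m = 2/π * (m/2) := by ring
    _ ≤ Real.sin (a/2) := this
  -- assemble
  have hnum := num_bound θ
  have hth2 : (3:ℝ) * θ^2 = 3 * a^2 := by rw [hadef, _root_.sq_abs]
  have step : ‖Complex.exp (-(θ:ℂ)*Complex.I) - 1 + (θ:ℂ)*Complex.I‖ /
      (a * (2 * |Real.sin (θ/2)|)) ≤ (3*a^2) / (a * (2 * ((1/π) * m))) := by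
    apply div_le_div₀ (by positivity) (by rw [← hth2]; exact hnum) (by positivity)
    have : (1/π) * m ≤ |Real.sin (θ/2)| := hsin
    nlinarith [abs_nonneg (Real.sin (θ/2))]
  refine step.trans ?_
  have heq : (3*a^2) / (a * (2 * ((1/π) * m))) = (3*π/2) * (a/m) := by
    field_simp
  rw [heq]
  rcases le_or_gt a π with h | h
  · have : m = a := by rw [hm, min_eq_left (by linarith)]
    rw [this, div_self (by positivity)]
    have : (0:ℝ) < 2*π - a := by linarith
    have h3 : 0 ≤ 3*π^2/(2*π-a) := by positivity
    linarith
  · have hma : m = 2*π - a := by rw [hm, min_eq_right (by linarith)]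
    rw [hma]
    have hpos : (0:ℝ) < 2*π - a := by linarith
    have heq2 : (3*π/2) * (a/(2*π-a)) = (3*π/2*a)/(2*π-a) := by ring
    have hle : (3*π/2*a) ≤ 3*π^2 := by nlinarith [Real.pi_pos]
    have h4 : (3*π/2*a)/(2*π-a) ≤ 3*π^2/(2*π-a) := by gcongr
    rw [heq2]
    have h5 : (0:ℝ) ≤ 3*π/2 := by positivity
    linarith

end Helpers

open Complex Finset

/-- `f_{L,1/2}(Ω) = (1/(2L)) ∑_{n=0}^{2L-1} exp(-π i n Ω)`, the critically spaced
case `Δ = 1/2` with `2L` antennas. -/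
noncomputable def fHalf (L : ℕ) (Ω : ℝ) : ℂ :=
  ((1 / (2 * (L : ℝ)) : ℝ) : ℂ) *
    ∑ n ∈ Finset.range (2 * L),
      Complex.exp (-(Real.pi : ℂ) * Complex.I * (n : ℂ) * (Ω : ℂ))


section Main
open Real

lemma core_bound (L N : ℕ) (hL : 0 < L) (hN : 0 < N)
    (hhalf : (L : ℝ) / N ≤ 1 / 2) (x : ℝ) (hx0 : x ≠ 0) (hx2 : |x| < 2) :
    ‖fHalf L x - fLD L N x‖ ≤ 3*π/(L:ℝ) + 6*π/((L:ℝ)*(2 - |x|)) := by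
  have hLR : (0:ℝ) < L := by exact_mod_cast hL
  have hNR : (0:ℝ) < N := by exact_mod_cast hN
  have hπ := Real.pi_pos
  have hΔ0 : 0 < (L:ℝ)/N := by positivity
  have hΔx : ((L:ℝ)/N) * |x| < 1 := by nlinarith [abs_nonneg x]
  have hxpos : 0 < |x| := abs_pos.mpr hx0
  -- the three angles
  have hθ1ne : π * x ≠ 0 := by
    intro h; rcases mul_eq_zero.mp h with h | h
    · exact hπ.ne' h
    · exact hx0 h
  have hθ1abs : |π * x| < 2 * π := by
    rw [abs_mul, abs_of_pos hπ]; nlinarith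
  have hθ2ne : 2 * π * ((L:ℝ)/N) * x ≠ 0 := by positivity
  have hθ2abs : |2 * π * ((L:ℝ)/N) * x| < 2 * π := by
    rw [abs_mul, abs_of_pos (by positivity : (0:ℝ) < 2 * π * ((L:ℝ)/N))]
    calc 2 * π * ((L:ℝ)/N) * |x| = 2*π*(((L:ℝ)/N) * |x|) := by ring
    _ < 2*π*1 := by nlinarith
    _ = 2*π := by ring
  set E1 : ℂ := Complex.exp (-((π * x : ℝ):ℂ) * Complex.I) with hE1
  set E2 : ℂ := Complex.exp (-((2 * π * ((L:ℝ)/N) * x : ℝ):ℂ) * Complex.I) with hE2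
  set F : ℂ := Complex.exp (-((2 * π * (L:ℝ) * x : ℝ):ℂ) * Complex.I) with hF
  have hE1sub := one_sub_exp_ne hθ1ne hθ1abs
  have hE2sub := one_sub_exp_ne hθ2ne hθ2abs
  have hE1ne1 : E1 ≠ 1 := fun h => hE1sub (sub_eq_zero.mpr h.symm)
  have hE2ne1 : E2 ≠ 1 := fun h => hE2sub (sub_eq_zero.mpr h.symm)
  -- geometric sums
  have hfH : fHalf L x = ((1 / (2 * (L : ℝ)) : ℝ) : ℂ) * ((F - 1)/(E1 - 1)) := by
    rw [fHalf]
    congr 1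
    rw [Finset.sum_congr rfl (fun n _ => ?_), geom_sum_eq hE1ne1 (2*L)]
    · congr 2
      rw [hE1, ← Complex.exp_nat_mul]
      congr 1
      push_cast; ring
    · show Complex.exp (-(Real.pi : ℂ) * Complex.I * (n : ℂ) * (x : ℂ)) = E1 ^ n
      rw [hE1, ← Complex.exp_nat_mul]
      congr 1
      push_cast; ring
  have hfL : fLD L N x = ((((L : ℝ) / N) / L : ℝ) : ℂ) * ((F - 1)/(E2 - 1)) := by
    rw [fLD]
    congr 1
    rw [Finset.sum_congr rfl (fun n _ => ?_), geom_sum_eq hE2ne1 N]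
    · congr 2
      rw [hE2, ← Complex.exp_nat_mul]
      congr 1
      have hNC0 : ((N:ℕ):ℂ) ≠ 0 := Nat.cast_ne_zero.mpr hN.ne'
      push_cast
      field_simp
    · show Complex.exp ((-2 : ℂ) * (Real.pi : ℂ) * Complex.I * (n : ℂ) *
          (((L : ℝ) / N : ℝ) : ℂ) * (x : ℂ)) = E2 ^ n
      rw [hE2, ← Complex.exp_nat_mul]
      congr 1
      push_cast; ring
  -- the key identity
  set H1 : ℂ := 1/(1 - E1) - 1/(((π * x : ℝ):ℂ)*Complex.I) with hH1
  set H2 : ℂ := 1/(1 - E2) - 1/(((2 * π * ((L:ℝ)/N) * x : ℝ):ℂ)*Complex.I) with hH2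
  have hid : fHalf L x - fLD L N x
      = (F - 1) * (-(((1 / (2 * (L : ℝ)) : ℝ) : ℂ)) * H1
          + ((((L : ℝ) / N) / L : ℝ) : ℂ) * H2) := by
    rw [hfH, hfL, hH1, hH2]
    have hLC : ((L:ℕ):ℂ) ≠ 0 := Nat.cast_ne_zero.mpr hL.ne'
    have hNC : ((N:ℕ):ℂ) ≠ 0 := Nat.cast_ne_zero.mpr hN.ne'
    have hxC : ((x:ℝ):ℂ) ≠ 0 := by exact_mod_cast hx0
    have hπC : ((π:ℝ):ℂ) ≠ 0 := by exact_mod_cast hπ.ne'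
    have hz1 : (((π * x : ℝ):ℂ)*Complex.I) ≠ 0 := by
      apply mul_ne_zero _ Complex.I_ne_zero
      exact_mod_cast hθ1ne
    have hz2 : (((2 * π * ((L:ℝ)/N) * x : ℝ):ℂ)*Complex.I) ≠ 0 := by
      apply mul_ne_zero _ Complex.I_ne_zero
      exact_mod_cast hθ2ne
    have hz' : ((1 / (2 * (L : ℝ)) : ℝ) : ℂ) * (1/(((π * x : ℝ):ℂ)*Complex.I))
        = ((((L : ℝ) / N) / L : ℝ) : ℂ) * (1/(((2 * π * ((L:ℝ)/N) * x : ℝ):ℂ)*Complex.I)) := by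
      rw [mul_one_div, mul_one_div, div_eq_div_iff hz1 hz2]
      push_cast
      field_simp
    rw [show E1 - 1 = -(1-E1) by ring, show E2 - 1 = -(1-E2) by ring, div_neg, div_neg]
    linear_combination (1 - F) * hz'
  -- bounds
  have hFabs : ‖F‖ = 1 := by
    rw [hF, show -((2 * π * (L:ℝ) * x : ℝ):ℂ) = ((-(2 * π * (L:ℝ) * x) : ℝ):ℂ) by push_cast; ring]
    exact Complex.norm_exp_ofReal_mul_I _
  have hF1 : ‖F - 1‖ ≤ 2 := by
    calc ‖F - 1‖ ≤ ‖F‖ + ‖(1:ℂ)‖ := norm_sub_le _ _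
    _ = 2 := by rw [hFabs, norm_one]; norm_num
  have hQpos : (0:ℝ) < 2 - |x| := by linarith
  have hH1b : ‖H1‖ ≤ 3*π/2 + 3*π/(2 - |x|) := by
    have h := h_bound hθ1ne hθ1abs
    have h2π1 : 2*π - |π*x| = π*(2 - |x|) := by rw [abs_mul, abs_of_pos hπ]; ring
    rw [h2π1, show 3*π^2/(π*(2-|x|)) = 3*π/(2-|x|) by
      rw [div_eq_div_iff (by positivity) (by positivity)]; ring] at h
    exact h
  have hH2b : ‖H2‖ ≤ 3*π/2 + 3*π/(2 - |x|) := by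
    have h := h_bound hθ2ne hθ2abs
    have hθ2le : |2*π*((L:ℝ)/N)*x| ≤ π*|x| := by
      rw [abs_mul, abs_of_pos (by positivity : (0:ℝ) < 2*π*((L:ℝ)/N))]
      have hmul := mul_le_mul_of_nonneg_right hhalf (by positivity : (0:ℝ) ≤ π*|x|)
      nlinarith [hmul]
    have hlow : π*(2 - |x|) ≤ 2*π - |2*π*((L:ℝ)/N)*x| := by nlinarith
    refine h.trans ?_
    have : 3*π^2/(2*π - |2*π*((L:ℝ)/N)*x|) ≤ 3*π^2/(π*(2-|x|)) := by
      apply div_le_div_of_nonneg_left (by positivity) (by positivity) hlow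
    rw [show 3*π^2/(π*(2-|x|)) = 3*π/(2-|x|) by
      rw [div_eq_div_iff (by positivity) (by positivity)]; ring] at this
    linarith
  have hc2 : ((L:ℝ)/N)/(L:ℝ) ≤ 1/(2*(L:ℝ)) := by
    rw [div_le_div_iff₀ (by positivity) (by positivity)]
    nlinarith
  have hc2pos : (0:ℝ) < ((L:ℝ)/N)/(L:ℝ) := by positivity
  have htri : ‖-(((1 / (2 * (L : ℝ)) : ℝ) : ℂ)) * H1
        + ((((L : ℝ) / N) / L : ℝ) : ℂ) * H2‖
      ≤ (1/(2*(L:ℝ))) * ‖H1‖ + (((L:ℝ)/N)/(L:ℝ)) * ‖H2‖ := by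
    calc ‖-(((1 / (2 * (L : ℝ)) : ℝ) : ℂ)) * H1
          + ((((L : ℝ) / N) / L : ℝ) : ℂ) * H2‖
        ≤ ‖-(((1 / (2 * (L : ℝ)) : ℝ) : ℂ)) * H1‖
          + ‖((((L : ℝ) / N) / L : ℝ) : ℂ) * H2‖ := norm_add_le _ _
    _ = (1/(2*(L:ℝ))) * ‖H1‖ + (((L:ℝ)/N)/(L:ℝ)) * ‖H2‖ := by
        rw [norm_mul, norm_mul, norm_neg, Complex.norm_real, Complex.norm_real, Real.norm_eq_abs, Real.norm_eq_abs,
          _root_.abs_of_pos (by positivity : (0:ℝ) < 1/(2*(L:ℝ))),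
          _root_.abs_of_pos hc2pos]
  have hD : ‖fHalf L x - fLD L N x‖
      ≤ 2 * ((1/(2*(L:ℝ))) * ‖H1‖ + (((L:ℝ)/N)/(L:ℝ)) * ‖H2‖) := by
    rw [hid, norm_mul]
    exact mul_le_mul hF1 htri (norm_nonneg _) (by norm_num)
  refine hD.trans ?_
  have hB : (0:ℝ) ≤ 3*π/2 + 3*π/(2 - |x|) := by positivity
  calc 2 * ((1/(2*(L:ℝ))) * ‖H1‖ + (((L:ℝ)/N)/(L:ℝ)) * ‖H2‖)
      ≤ 2 * ((1/(2*(L:ℝ))) * (3*π/2 + 3*π/(2 - |x|))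
          + (1/(2*(L:ℝ))) * (3*π/2 + 3*π/(2 - |x|))) := by
        have h1 : (1/(2*(L:ℝ))) * ‖H1‖ ≤ (1/(2*(L:ℝ))) * (3*π/2 + 3*π/(2 - |x|)) := by
          apply mul_le_mul_of_nonneg_left hH1b (by positivity)
        have h2 : (((L:ℝ)/N)/(L:ℝ)) * ‖H2‖
            ≤ (1/(2*(L:ℝ))) * (3*π/2 + 3*π/(2 - |x|)) := by
          apply mul_le_mul hc2 hH2b (norm_nonneg _) (by positivity)
        linarith
  _ = 3*π/(L:ℝ) + 6*π/((L:ℝ)*(2 - |x|)) := by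
      field_simp
      ring

/-- There is a constant `A > 0` such that for all positive
integers `L, N` with `Δ = L/N ∈ (0, 1/2]`, every `0 ≤ k ≤ L`, and every
`Ω ∈ [-1,1]` with `|k − LΩ| < 2L`:
`|f_{L,1/2}(k/L − Ω) − f_{L,Δ}(k/L − Ω)|² < 1/(4L²) + A/(2L − |k − LΩ|)²`. -/
theorem Dk_bound :
    ∃ A > (0 : ℝ), ∀ L N : ℕ, 0 < L → 0 < N →
      0 < (L : ℝ) / N → (L : ℝ) / N ≤ 1 / 2 →
      ∀ k : ℕ, k ≤ L → ∀ Ω ∈ Set.Icc (-1 : ℝ) 1,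
        |(k : ℝ) - (L : ℝ) * Ω| < 2 * (L : ℝ) →
        ‖fHalf L ((k : ℝ) / L - Ω) - fLD L N ((k : ℝ) / L - Ω)‖ ^ 2 <
          1 / (4 * (L : ℝ) ^ 2) + A / (2 * (L : ℝ) - |(k : ℝ) - (L : ℝ) * Ω|) ^ 2 := by
  refine ⟨2400, by norm_num, ?_⟩
  intro L N hL hN hΔpos hhalf k hk Ω hΩ hlt
  have hLR : (0:ℝ) < L := by exact_mod_cast hL
  have hNR : (0:ℝ) < N := by exact_mod_cast hN
  set x : ℝ := (k:ℝ)/L - Ω with hx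
  have hLx : (L:ℝ) * x = (k:ℝ) - (L:ℝ)*Ω := by
    rw [hx]; field_simp
  have habseq : |(k:ℝ) - (L:ℝ)*Ω| = (L:ℝ) * |x| := by
    rw [← hLx, abs_mul, _root_.abs_of_pos hLR]
  have hx2 : |x| < 2 := by
    rw [habseq] at hlt
    nlinarith [abs_nonneg x]
  have hMpos : (0:ℝ) < 2*(L:ℝ) - |(k:ℝ) - (L:ℝ)*Ω| := by linarith
  have hMeq : 2*(L:ℝ) - |(k:ℝ) - (L:ℝ)*Ω| = (L:ℝ)*(2 - |x|) := by
    rw [habseq]; ring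
  have h14 : (0:ℝ) < 1/(4*(L:ℝ)^2) := by positivity
  have hLC : ((L:ℕ):ℂ) ≠ 0 := Nat.cast_ne_zero.mpr hL.ne'
  have hNC : ((N:ℕ):ℂ) ≠ 0 := Nat.cast_ne_zero.mpr hN.ne'
  by_cases hx0 : x = 0
  · rw [hx0]
    have hfH : fHalf L 0 = 1 := by
      rw [fHalf]
      push_cast
      simp only [mul_zero, Complex.exp_zero, Finset.sum_const, card_range, nsmul_eq_mul]
      push_cast
      field_simp
    have hfL : fLD L N 0 = 1 := by
      rw [fLD]
      push_cast
      simp only [mul_zero, Complex.exp_zero, Finset.sum_const, card_range, nsmul_eq_mul]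
      push_cast
      field_simp
    have h2 : (0:ℝ) < 2400/(2*(L:ℝ) - |(k:ℝ) - (L:ℝ)*Ω|)^2 :=
      div_pos (by norm_num) (pow_pos hMpos 2)
    have h0 : ‖(1:ℂ) - 1‖ ^ 2 = 0 := by norm_num
    rw [hfH, hfL, h0]
    exact add_pos h14 h2
  · have hcore := core_bound L N hL hN hhalf x hx0 hx2
    have hQ : (0:ℝ) < 2 - |x| := by linarith
    have hMp : (0:ℝ) < (L:ℝ)*(2 - |x|) := by positivity
    have hM2L : (L:ℝ)*(2 - |x|) ≤ 2*(L:ℝ) := by nlinarith [abs_nonneg x]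
    have hπ := Real.pi_pos
    have h3π : 3*π/(L:ℝ) ≤ 6*π/((L:ℝ)*(2 - |x|)) := by
      rw [div_le_div_iff₀ hLR hMp]
      nlinarith [mul_le_mul_of_nonneg_left hM2L (by positivity : (0:ℝ) ≤ 3*π)]
    have hD12 : ‖fHalf L x - fLD L N x‖ ≤ 12*π/((L:ℝ)*(2 - |x|)) := by
      have he : 6*π/((L:ℝ)*(2 - |x|)) + 6*π/((L:ℝ)*(2 - |x|)) = 12*π/((L:ℝ)*(2 - |x|)) := by
        ring
      linarith
    have hsq : ‖fHalf L x - fLD L N x‖^2 ≤ (12*π/((L:ℝ)*(2 - |x|)))^2 :=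
      pow_le_pow_left₀ (norm_nonneg _) hD12 2
    have hval : (12*π/((L:ℝ)*(2 - |x|)))^2 = 144*π^2/((L:ℝ)*(2 - |x|))^2 := by
      rw [div_pow, mul_pow]; norm_num
    have hlt2 : 144*π^2/((L:ℝ)*(2 - |x|))^2 < 2400/((L:ℝ)*(2 - |x|))^2 := by
      apply div_lt_div_of_pos_right ?_ (pow_pos hMp 2)
      nlinarith [Real.pi_le_four, Real.pi_pos]
    rw [hMeq]
    linarith

end Main
end
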